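/- If M' is a minor of M (i.e., M' = M \ S / T for disjoint S, T ⊆ N), then the p-characteristic set of M is contained in the p-characteristic set of M': χ_M ⊆ χ_{M'}. -/
import Mathlib


private lemma chi_minor_subset_toNat_split (a x b c : ℤ) (h1 : a ≤ x) (h2 : x ≤ b)
    (h3 : b ≤ c) :
    (c - x).toNat = ((b - a) - (x - a)).toNat + (c - b).toNat := by omega

/-- If `M' = M \ S / T'` is a minor of `M`, then `χ_M ⊆ χ_{M'}`:
for every `v ≥ 2`, if a `VOA(M, v)` exists then a `VOA(M', v)` exists. -/
theorem chi_minor_subset {α : Type*} [DecidableEq α]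
    (N : Finset α) (r : Finset α → ℤ)
    (h1 : ∀ A ⊆ N, 0 ≤ r A ∧ r A ≤ A.card)
    (h2 : ∀ A B : Finset α, A ⊆ B → B ⊆ N → r A ≤ r B)
    (h3 : ∀ A B : Finset α, A ⊆ N → B ⊆ N →
      r (A ∪ B) + r (A ∩ B) ≤ r A + r B)
    (S T' : Finset α) (hSN : S ⊆ N) (hTN : T' ⊆ N) (hST : Disjoint S T')
    (v : ℕ) (hv : 2 ≤ v) :
    -- a VOA(M, v) exists
    (∃ T : Fin (v ^ (r N).toNat) → α → Fin v,
      ∀ A ⊆ N, ∀ i,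
        (Finset.univ.filter (fun j => ∀ a ∈ A, T j a = T i a)).card
          = v ^ (r N - r A).toNat) →
    -- then a VOA(M', v) exists, where M' = M \ S / T' has ground set
    -- (N \ S) \ T' and rank function A ↦ r (A ∪ T') - r T'
    (∃ T : Fin (v ^ (r (((N \ S) \ T') ∪ T') - r T').toNat) → α → Fin v,
      ∀ A ⊆ (N \ S) \ T', ∀ i,
        (Finset.univ.filter (fun j => ∀ a ∈ A, T j a = T i a)).card
          = v ^ ((r (((N \ S) \ T') ∪ T') - r T') - (r (A ∪ T') - r T')).toNat) := by
  classical
  rintro ⟨T, hT⟩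
  have hvpos : 0 < v := by omega
  have hT'NS : T' ⊆ N \ S := fun a ha =>
    Finset.mem_sdiff.2 ⟨hTN ha, fun hs => (Finset.disjoint_left.1 hST hs) ha⟩
  have hunion : ((N \ S) \ T') ∪ T' = N \ S := Finset.sdiff_union_of_subset hT'NS
  rw [hunion]
  have hNSN : N \ S ⊆ N := Finset.sdiff_subset
  have hN'N : (N \ S) \ T' ⊆ N := Finset.Subset.trans Finset.sdiff_subset hNSN
  have hb_le_c : r (N \ S) ≤ r N := h2 _ _ hNSN Finset.Subset.rfl
  let i₀ : Fin (v ^ (r N).toNat) := ⟨0, pow_pos hvpos _⟩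
  let C : Finset (Fin (v ^ (r N).toNat)) :=
    Finset.univ.filter (fun j => ∀ a ∈ T', T j a = T i₀ a)
  have hi₀C : i₀ ∈ C := Finset.mem_filter.2 ⟨Finset.mem_univ _, fun a _ => rfl⟩
  let g : Fin (v ^ (r N).toNat) → α → Fin v :=
    fun j a => if a ∈ (N \ S) \ T' then T j a else ⟨0, hvpos⟩
  have hg : ∀ j k, g j = g k ↔ ∀ a ∈ (N \ S) \ T', T j a = T k a := by
    intro j k
    constructor
    · intro h a ha
      have h' := congrFun h a
      simp only [g] at h'
      rwa [if_pos ha, if_pos ha] at h'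
    · intro h
      funext a
      by_cases ha : a ∈ (N \ S) \ T'
      · simp only [g]
        rw [if_pos ha, if_pos ha]
        exact h a ha
      · simp only [g]
        rw [if_neg ha, if_neg ha]
  let P : Finset (α → Fin v) := C.image g
  -- counting within the "coset" C
  have L1 : ∀ j ∈ C, ∀ A ⊆ (N \ S) \ T',
      (C.filter (fun k => ∀ a ∈ A, T k a = T j a)).card
        = v ^ (r N - r (A ∪ T')).toNat := by
    intro j hj A hA
    have hjT' : ∀ a ∈ T', T j a = T i₀ a := (Finset.mem_filter.1 hj).2
    have hset : C.filter (fun k => ∀ a ∈ A, T k a = T j a)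
        = Finset.univ.filter (fun k => ∀ a ∈ A ∪ T', T k a = T j a) := by
      ext k
      simp only [C, Finset.filter_filter, Finset.mem_filter, Finset.mem_univ, true_and]
      constructor
      · rintro ⟨hkT', hkA⟩ a ha
        rcases Finset.mem_union.1 ha with h | h
        · exact hkA a h
        · rw [hkT' a h, hjT' a h]
      · intro h
        refine ⟨fun a ha => ?_, fun a ha => h a (Finset.mem_union_left _ ha)⟩
        rw [h a (Finset.mem_union_right _ ha), hjT' a ha]
    rw [hset]
    exact hT (A ∪ T') (Finset.union_subset (Finset.Subset.trans hA hN'N) hTN) j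
  -- fiber sizes of g on C
  have L2 : ∀ j ∈ C, (C.filter (fun k => g k = g j)).card
      = v ^ (r N - r (N \ S)).toNat := by
    intro j hj
    have hset : C.filter (fun k => g k = g j)
        = C.filter (fun k => ∀ a ∈ (N \ S) \ T', T k a = T j a) := by
      apply Finset.filter_congr
      intro k _
      simpa using hg k j
    rw [hset, L1 j hj ((N \ S) \ T') Finset.Subset.rfl, hunion]
  -- main counting identity on patterns
  have L3 : ∀ j ∈ C, ∀ A ⊆ (N \ S) \ T',
      (P.filter (fun p => ∀ a ∈ A, p a = g j a)).card
          * v ^ (r N - r (N \ S)).toNat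
        = v ^ (r N - r (A ∪ T')).toNat := by
    intro j hj A hA
    set s := C.filter (fun k => ∀ a ∈ A, T k a = T j a) with hs
    have hscard := L1 j hj A hA
    have himg : s.image g = P.filter (fun p => ∀ a ∈ A, p a = g j a) := by
      ext p
      constructor
      · intro hp
        obtain ⟨k, hk, rfl⟩ := Finset.mem_image.1 hp
        rw [hs] at hk
        obtain ⟨hkC, hkA⟩ := Finset.mem_filter.1 hk
        refine Finset.mem_filter.2 ⟨Finset.mem_image.2 ⟨k, hkC, rfl⟩, fun a ha => ?_⟩
        have haN' : a ∈ (N \ S) \ T' := hA ha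
        simp only [g]
        rw [if_pos haN', if_pos haN']
        exact hkA a ha
      · intro hp
        obtain ⟨hpP, hpA⟩ := Finset.mem_filter.1 hp
        obtain ⟨k, hkC, rfl⟩ := Finset.mem_image.1 hpP
        refine Finset.mem_image.2 ⟨k, ?_, rfl⟩
        rw [hs]
        refine Finset.mem_filter.2 ⟨hkC, fun a ha => ?_⟩
        have haN' := hA ha
        have h' := hpA a ha
        simp only [g] at h'
        rwa [if_pos haN', if_pos haN'] at h' 
    have hsum : s.card = ∑ p ∈ s.image g, (s.filter (fun k => g k = p)).card :=
      Finset.card_eq_sum_card_image g s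
    have hfiber : ∀ p ∈ s.image g, (s.filter (fun k => g k = p)).card
        = v ^ (r N - r (N \ S)).toNat := by
      intro p hp
      obtain ⟨k, hk, rfl⟩ := Finset.mem_image.1 hp
      have hkC : k ∈ C := (Finset.mem_filter.1 hk).1
      rw [hs] at hk
      have hkA := (Finset.mem_filter.1 hk).2
      have hset : s.filter (fun m => g m = g k) = C.filter (fun m => g m = g k) := by
        ext m
        rw [hs]
        constructor
        · intro hm
          have h' := Finset.mem_filter.1 hm
          exact Finset.mem_filter.2 ⟨(Finset.mem_filter.1 h'.1).1, h'.2⟩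
        · intro hm
          have h' := Finset.mem_filter.1 hm
          have hmk := (hg m k).1 h'.2
          exact Finset.mem_filter.2 ⟨Finset.mem_filter.2 ⟨h'.1,
            fun a ha => (hmk a (hA ha)).trans (hkA a ha)⟩, h'.2⟩
      rw [hset]
      exact L2 k hkC
    have : s.card = (P.filter (fun p => ∀ a ∈ A, p a = g j a)).card
        * v ^ (r N - r (N \ S)).toNat := by
      rw [hsum, Finset.sum_congr rfl hfiber, Finset.sum_const, himg, smul_eq_mul,
        mul_comm]
    rw [← this, hscard]
  -- cardinality of the pattern set P
  have hPcard : P.card = v ^ (r (N \ S) - r T').toNat := by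
    have h0 := L3 i₀ hi₀C ∅ (Finset.empty_subset _)
    have hfilt : P.filter (fun p => ∀ a ∈ (∅ : Finset α), p a = g i₀ a) = P := by
      apply Finset.filter_true_of_mem
      intro p _ a ha
      exact absurd ha (Finset.notMem_empty a)
    rw [hfilt, Finset.empty_union] at h0
    have ha_le_b : r T' ≤ r (N \ S) := h2 _ _ hT'NS hNSN
    have hsplit : (r N - r T').toNat
        = (r (N \ S) - r T').toNat + (r N - r (N \ S)).toNat := by omega
    rw [hsplit, pow_add] at h0
    exact Nat.eq_of_mul_eq_mul_right (pow_pos hvpos _) h0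
  let e := P.equivFinOfCardEq hPcard
  refine ⟨fun k => (e.symm k : α → Fin v), ?_⟩
  intro A hA i
  obtain ⟨j, hjC, hgj⟩ := Finset.mem_image.1 (e.symm i).2
  have hcard : (Finset.univ.filter (fun k =>
        ∀ a ∈ A, (e.symm k : α → Fin v) a = (e.symm i : α → Fin v) a)).card
      = (P.filter (fun p => ∀ a ∈ A, p a = g j a)).card := by
    apply Finset.card_bij (fun k _ => (e.symm k : α → Fin v))
    · intro k hk
      simp only [Finset.mem_filter, Finset.mem_univ, true_and] at hk ⊢
      refine ⟨(e.symm k).2, fun a ha => ?_⟩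
      rw [hk a ha, ← hgj]
    · intro k _ k' _ h
      have : e.symm k = e.symm k' := Subtype.ext h
      exact e.symm.injective this
    · intro p hp
      simp only [Finset.mem_filter] at hp
      refine ⟨e ⟨p, hp.1⟩, ?_, by simp⟩
      simp only [Finset.mem_filter, Finset.mem_univ, true_and, Equiv.symm_apply_apply]
      intro a ha
      rw [hp.2 a ha, hgj]
  rw [hcard]
  have hAT'NS : A ∪ T' ⊆ N \ S :=
    Finset.union_subset (Finset.Subset.trans hA Finset.sdiff_subset) hT'NS
  have hAT'N : A ∪ T' ⊆ N := Finset.Subset.trans hAT'NS hNSN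
  have ha_le : r T' ≤ r (A ∪ T') := h2 _ _ Finset.subset_union_right hAT'N
  have hb_le : r (A ∪ T') ≤ r (N \ S) := h2 _ _ hAT'NS hNSN
  have h0 := L3 j hjC A hA
  have hsplit : (r N - r (A ∪ T')).toNat
      = ((r (N \ S) - r T') - (r (A ∪ T') - r T')).toNat
        + (r N - r (N \ S)).toNat :=
    chi_minor_subset_toNat_split _ _ _ _ ha_le hb_le hb_le_c
  rw [hsplit, pow_add] at h0
  exact Nat.eq_of_mul_eq_mul_right (pow_pos hvpos _) h0
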